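/- Let 𝒜 = {A₀} ∪ 𝒟 be a finite subset of SL(2,ℝ) generating a free semigroup, and let 𝒜_∞ = {A₀ B : B ∈ 𝒟*} ∪ {A₀}, where 𝒟* is the semigroup generated by 𝒟 = 𝒜 \ {A₀}. Then the zeta functions satisfy ζ_𝒜(s) ≤ (1 + ‖A₀‖^{2s})·ζ_{𝒜_∞}(s) for all s > 0, and consequently the critical exponents satisfy δ_𝒜 = δ_{𝒜_∞}. -/

import Mathlib

open Matrix

abbrev SL2 := Matrix.SpecialLinearGroup (Fin 2) ℝ

/-- The operator norm of a 2x2 real matrix, acting on Euclidean `ℝ²`. -/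
noncomputable def matNorm (A : Matrix (Fin 2) (Fin 2) ℝ) : ℝ :=
  ‖LinearMap.toContinuousLinearMap (Matrix.toEuclideanLin A)‖

instance : TopologicalSpace SL2 :=
  TopologicalSpace.induced (fun A => (A : Matrix (Fin 2) (Fin 2) ℝ)) inferInstance

/-- Product of the word `l` under the letter assignment `A`. -/
def wordProd {ι : Type*} (A : ι → SL2) (l : List ι) : SL2 := (l.map A).prod

/-- The zeta function `ζ_𝒜(s) = ∑_{n≥1} ∑_{A ∈ 𝒜ⁿ} ‖A‖^{-2s}`, the sum ranging over all
nonempty words over the alphabet `ι` (valued in `ℝ≥0∞` so divergence is value `⊤`). -/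
noncomputable def zeta {ι : Type*} (A : ι → SL2) (s : ℝ) : ENNReal :=
  ∑' l : {l : List ι // l ≠ []}, ENNReal.ofReal (matNorm (wordProd A l.1) ^ (-2 * s))

/-- The critical exponent `δ_𝒜 = inf {s > 0 : ζ_𝒜(s) < ∞}` (equal to `⊤` if the zeta
function always diverges). -/
noncomputable def deltaOf {ι : Type*} (A : ι → SL2) : ENNReal :=
  ⨅ s : {s : ℝ // 0 < s ∧ zeta A s < ⊤}, ENNReal.ofReal s.1

section Aux

open scoped Matrix.Norms.L2Operator

lemma matNorm_eq_l2 (A : Matrix (Fin 2) (Fin 2) ℝ) : matNorm A = ‖A‖ := rfl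

lemma matNorm_mul_le (A B : Matrix (Fin 2) (Fin 2) ℝ) :
    matNorm (A * B) ≤ matNorm A * matNorm B := by
  simp only [matNorm_eq_l2]; exact Matrix.l2_opNorm_mul A B

lemma matNorm_sl2_pos (P : SL2) : 0 < matNorm (P : Matrix (Fin 2) (Fin 2) ℝ) := by
  rw [matNorm_eq_l2, norm_pos_iff]
  intro h
  have := P.2
  rw [h] at this
  simp at this

end Aux

lemma rpow_key {a x y s : ℝ} (hs : 0 < s) (ha : 0 < a) (hx : 0 < x) (hy : 0 < y)
    (h : y ≤ a * x) : x ^ (-2 * s) ≤ a ^ (2 * s) * y ^ (-2 * s) := by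
  have h2s : (0:ℝ) ≤ 2 * s := by linarith
  rw [neg_mul, Real.rpow_neg hx.le, Real.rpow_neg hy.le, ← Real.inv_rpow hx.le,
    ← Real.inv_rpow hy.le, ← Real.mul_rpow ha.le (by positivity)]
  refine Real.rpow_le_rpow (by positivity) ?_ h2s
  rw [inv_eq_one_div, ← div_eq_mul_inv, div_le_div_iff₀ hx hy]
  nlinarith

namespace Stmt17Aux

variable {ι : Type*}

/-- Flattening of a word over `𝒜_∞` to a word over `𝒜`. -/
def flat (L : List (List ι)) : List (Option ι) := L.flatMap (fun D => none :: D.map some)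

@[simp] lemma flat_nil : flat ([] : List (List ι)) = [] := rfl

@[simp] lemma flat_cons (D : List ι) (T : List (List ι)) :
    flat (D :: T) = none :: (D.map some ++ flat T) := rfl

lemma wordProd_cons (A : ι → SL2) (x : ι) (l : List ι) :
    wordProd A (x :: l) = A x * wordProd A l := by simp [wordProd]

lemma wordProd_append (A : ι → SL2) (l₁ l₂ : List ι) :
    wordProd A (l₁ ++ l₂) = wordProd A l₁ * wordProd A l₂ := by simp [wordProd]

lemma wordProd_flat (A₀ : SL2) (d : ι → SL2) (L : List (List ι)) :
    wordProd (fun o : Option ι => o.elim A₀ d) (flat L) =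
      wordProd (fun l : List ι => A₀ * wordProd d l) L := by
  induction L with
  | nil => simp [wordProd]
  | cons D T ih =>
      rw [flat_cons, wordProd_cons, wordProd_cons, wordProd_append, ih]
      have : wordProd (fun o : Option ι => o.elim A₀ d) (D.map some) = wordProd d D := by
        simp [wordProd, List.map_map, Function.comp_def]
      rw [this, mul_assoc]
      rfl

lemma flat_aux : ∀ (D₁ D₂ : List ι) (T₁ T₂ : List (List ι)),
    D₁.map some ++ flat T₁ = D₂.map some ++ flat T₂ → D₁ = D₂ ∧ flat T₁ = flat T₂ := by
  intro D₁
  induction D₁ with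
  | nil =>
      intro D₂ T₁ T₂ h
      cases D₂ with
      | nil => simpa using h
      | cons j D₂' =>
          exfalso
          cases T₁ with
          | nil => simp at h
          | cons D T => simp at h
  | cons i D₁' ih =>
      intro D₂ T₁ T₂ h
      cases D₂ with
      | nil =>
          exfalso
          cases T₂ with
          | nil => simp at h
          | cons D T => simp at h
      | cons j D₂' =>
          simp only [List.map_cons, List.cons_append, List.cons.injEq, Option.some.injEq] at h
          obtain ⟨rfl, h2⟩ := h
          obtain ⟨rfl, h3⟩ := ih D₂' T₁ T₂ h2
          exact ⟨rfl, h3⟩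

lemma flat_injective : Function.Injective (flat (ι := ι)) := by
  intro T₁
  induction T₁ with
  | nil =>
      intro T₂ h
      cases T₂ with
      | nil => rfl
      | cons D T => simp at h
  | cons D₁ T₁' ih =>
      intro T₂ h
      cases T₂ with
      | nil => simp at h
      | cons D₂ T₂' =>
          simp only [flat_cons, List.cons.injEq, true_and] at h
          obtain ⟨rfl, h2⟩ := flat_aux D₁ D₂ T₁' T₂' h
          rw [ih h2]

lemma split_somes : ∀ r : List (Option ι),
    ∃ (D : List ι) (r' : List (Option ι)), r = D.map some ++ r' ∧
      (r' = [] ∨ ∃ t, r' = none :: t) := by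
  intro r
  induction r with
  | nil => exact ⟨[], [], rfl, Or.inl rfl⟩
  | cons o t ih =>
      cases o with
      | none => exact ⟨[], none :: t, rfl, Or.inr ⟨t, rfl⟩⟩
      | some i =>
          obtain ⟨D, r', h1, h2⟩ := ih
          exact ⟨i :: D, r', by simp [h1], h2⟩

lemma flat_surj_aux : ∀ (n : ℕ) (w : List (Option ι)), w.length ≤ n →
    ∀ t, w = none :: t → ∃ L : List (List ι), L ≠ [] ∧ flat L = w := by
  intro n
  induction n with
  | zero => intro w hw t ht; subst ht; simp at hw
  | succ n ih =>
      intro w hw t ht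
      subst ht
      obtain ⟨D, r', h1, h2⟩ := split_somes t
      cases h2 with
      | inl h2 =>
          refine ⟨[D], by simp, ?_⟩
          subst h2; simp [h1]
      | inr h2 =>
          obtain ⟨t', rfl⟩ := h2
          have hlen : (none :: t' : List (Option ι)).length ≤ n := by
            have : t.length ≤ n := by simpa using Nat.le_of_succ_le_succ hw
            have h3 : (none :: t' : List (Option ι)).length ≤ t.length := by
              rw [h1]; simp
            omega
          obtain ⟨L', hL', hfl⟩ := ih (none :: t') hlen t' rfl
          refine ⟨D :: L', by simp, ?_⟩
          rw [flat_cons, hfl, ← h1]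

lemma flat_ne_nil {L : List (List ι)} (h : L ≠ []) : flat L ≠ [] := by
  cases L with
  | nil => exact absurd rfl h
  | cons D T => simp

end Stmt17Aux

open Stmt17Aux in
/-- For `𝒜 = {A₀} ∪ 𝒟` generating a free semigroup and
`𝒜_∞ = {A₀B : B ∈ 𝒟*} ∪ {A₀}` (alphabet: words over `𝒟`, the letter `l` standing for
`A₀ · (product of 𝒟 over l)`): `ζ_𝒜(s) ≤ (1 + ‖A₀‖^{2s}) ζ_{𝒜_∞}(s)` for all `s > 0`,
and `δ_𝒜 = δ_{𝒜_∞}`. -/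
theorem stmt17 {ι : Type*} [Fintype ι] (A₀ : SL2) (d : ι → SL2)
    (hfree : Function.Injective (fun l : {l : List (Option ι) // l ≠ []} =>
      wordProd (fun o : Option ι => o.elim A₀ d) l.1)) :
    (∀ s : ℝ, 0 < s →
      zeta (fun o : Option ι => o.elim A₀ d) s ≤
        ENNReal.ofReal (1 + matNorm ((A₀ : SL2) : Matrix (Fin 2) (Fin 2) ℝ) ^ (2 * s)) *
          zeta (fun l : List ι => A₀ * wordProd d l) s) ∧
    deltaOf (fun o : Option ι => o.elim A₀ d) =
      deltaOf (fun l : List ι => A₀ * wordProd d l) := by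
  classical
  set A : Option ι → SL2 := fun o => o.elim A₀ d with hA
  set A' : List ι → SL2 := fun l => A₀ * wordProd d l with hA'
  set a : ℝ := matNorm ((A₀ : SL2) : Matrix (Fin 2) (Fin 2) ℝ) with ha
  have ha0 : 0 < a := matNorm_sl2_pos A₀
  -- the set of words starting with `none`
  set W := {l : List (Option ι) // l ≠ []} with hW
  set p : Set W := {w : W | w.1.head? = some none} with hp
  -- the summand
  have key : ∀ s : ℝ,
      (∑' w : p, ENNReal.ofReal (matNorm (wordProd A w.1.1) ^ (-2 * s)))
        = zeta A' s := by
    intro s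
    -- build the equivalence
    have hbij : Function.Bijective
        (fun L : {L : List (List ι) // L ≠ []} =>
          (⟨⟨flat L.1, flat_ne_nil L.2⟩, by
            obtain ⟨L, hL⟩ := L
            cases L with
            | nil => exact absurd rfl hL
            | cons D T => simp [hp]⟩ : p)) := by
      constructor
      · intro L₁ L₂ h
        apply Subtype.ext
        apply flat_injective
        simpa using congrArg (fun w : p => w.1.1) h
      · rintro ⟨⟨w, hw⟩, hmem⟩
        have : ∃ t, w = none :: t := by
          cases w with
          | nil => exact absurd rfl hw
          | cons o t =>
              simp only [hp, Set.mem_setOf_eq, List.head?_cons, Option.some.injEq] at hmem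
              exact ⟨t, by rw [hmem]⟩
        obtain ⟨t, rfl⟩ := this
        obtain ⟨L, hL, hfl⟩ := flat_surj_aux (none :: t).length (none :: t) le_rfl t rfl
        exact ⟨⟨L, hL⟩, by simp [Subtype.ext_iff, hfl]⟩
    let E := Equiv.ofBijective _ hbij
    rw [zeta, ← E.tsum_eq]
    congr 1
    funext L
    simp only [E, Equiv.ofBijective_apply]
    rw [wordProd_flat]
  -- pointwise bound on words not starting with `none`
  have hbound : ∀ s : ℝ, 0 < s → ∀ w : W,
      ENNReal.ofReal (matNorm (wordProd A w.1) ^ (-2 * s)) ≤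
        ENNReal.ofReal (a ^ (2 * s)) *
          ENNReal.ofReal (matNorm (wordProd A (none :: w.1)) ^ (-2 * s)) := by
    intro s hs w
    rw [← ENNReal.ofReal_mul (by positivity)]
    apply ENNReal.ofReal_le_ofReal
    have hx : 0 < matNorm (wordProd A w.1 : SL2) := matNorm_sl2_pos _
    have hy : 0 < matNorm (wordProd A (none :: w.1) : SL2) := matNorm_sl2_pos _
    apply rpow_key hs ha0 hx hy
    have : wordProd A (none :: w.1) = A₀ * wordProd A w.1 := wordProd_cons A none w.1
    rw [this]
    exact matNorm_mul_le _ _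
  -- the splitting of the zeta function
  have hsplit : ∀ s : ℝ, zeta A s =
      (∑' w : p, ENNReal.ofReal (matNorm (wordProd A w.1.1) ^ (-2 * s)))
        + ∑' w : (pᶜ : Set W), ENNReal.ofReal (matNorm (wordProd A w.1.1) ^ (-2 * s)) := by
    intro s
    rw [zeta]
    exact (Summable.tsum_add_tsum_compl ENNReal.summable ENNReal.summable).symm
  -- the complement part is bounded
  have hcompl : ∀ s : ℝ, 0 < s →
      (∑' w : (pᶜ : Set W), ENNReal.ofReal (matNorm (wordProd A w.1.1) ^ (-2 * s))) ≤
        ENNReal.ofReal (a ^ (2 * s)) * zeta A' s := by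
    intro s hs
    calc (∑' w : (pᶜ : Set W), ENNReal.ofReal (matNorm (wordProd A w.1.1) ^ (-2 * s)))
        ≤ ∑' w : (pᶜ : Set W), ENNReal.ofReal (a ^ (2 * s)) *
            ENNReal.ofReal (matNorm (wordProd A (none :: w.1.1)) ^ (-2 * s)) :=
          ENNReal.tsum_le_tsum (fun w => hbound s hs w.1)
      _ = ENNReal.ofReal (a ^ (2 * s)) * ∑' w : (pᶜ : Set W),
            ENNReal.ofReal (matNorm (wordProd A (none :: w.1.1)) ^ (-2 * s)) :=
          ENNReal.tsum_mul_left
      _ ≤ ENNReal.ofReal (a ^ (2 * s)) *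
            ∑' w : p, ENNReal.ofReal (matNorm (wordProd A w.1.1) ^ (-2 * s)) := by
          gcongr
          have hinj : Function.Injective
              (fun w : (pᶜ : Set W) => (⟨⟨none :: w.1.1, by simp⟩, by simp [hp]⟩ : p)) := by
            intro w₁ w₂ h
            have h2 := congrArg (fun w : p => w.1.1) h
            simp only [List.cons.injEq, true_and] at h2
            exact Subtype.ext (Subtype.ext h2)
          exact ENNReal.tsum_comp_le_tsum_of_injective hinj
            (fun w : p => ENNReal.ofReal (matNorm (wordProd A w.1.1) ^ (-2 * s)))
      _ = ENNReal.ofReal (a ^ (2 * s)) * zeta A' s := by rw [key s]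
  -- part 1
  have part1 : ∀ s : ℝ, 0 < s →
      zeta A s ≤ ENNReal.ofReal (1 + a ^ (2 * s)) * zeta A' s := by
    intro s hs
    rw [hsplit s, key s, ENNReal.ofReal_add zero_le_one (by positivity), ENNReal.ofReal_one,
      add_mul, one_mul]
    exact add_le_add le_rfl (hcompl s hs)
  refine ⟨part1, ?_⟩
  -- part 2
  have hle : ∀ s : ℝ, zeta A' s ≤ zeta A s := by
    intro s
    rw [hsplit s, key s]
    exact le_self_add
  have hiff : ∀ s : ℝ, (0 < s ∧ zeta A s < ⊤) ↔ (0 < s ∧ zeta A' s < ⊤) := by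
    intro s
    constructor
    · rintro ⟨hs, h⟩
      exact ⟨hs, lt_of_le_of_lt (hle s) h⟩
    · rintro ⟨hs, h⟩
      refine ⟨hs, lt_of_le_of_lt (part1 s hs) ?_⟩
      exact ENNReal.mul_lt_top ENNReal.ofReal_lt_top h
  apply le_antisymm
  · exact le_iInf fun t => iInf_le_of_le ⟨t.1, (hiff t.1).mpr t.2⟩ le_rfl
  · exact le_iInf fun t => iInf_le_of_le ⟨t.1, (hiff t.1).mp t.2⟩ le_rfl
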